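/- If (F_i, F_j) is jointly mixable with joint center c (i.e., there exist X_i ~ F_i, X_j ~ F_j with X_i + X_j = c a.s.), and the remaining risks are constructed comonotonically as X_k = F_k^{-1}(U) for k ∉ {i,j} with the mixable pair chosen so that X_j = F_j^{-1}(1-U) and X_i = F_i^{-1}(U) sum with the rest, then S = X_1 + ... + X_d = c + Σ_{k ≠ i,j} F_k^{-1}(U), which is a nondecreasing function of U; hence X_j = F_j^{-1}(1-U) and S are antimonotonic, and E[X_j | S > VaR_p(S)] = LES_{1-p}(X_j) provided F_j is continuous and P(S > VaR_p(S)) = 1-p. -/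

import Mathlib

open MeasureTheory

/-- Value-at-Risk: the `p`-quantile of `X` under `μ`. -/
noncomputable def VaR {Ω : Type*} [MeasurableSpace Ω] (μ : Measure Ω) (X : Ω → ℝ) (p : ℝ) : ℝ :=
  sInf {x : ℝ | p ≤ (μ {ω | X ω ≤ x}).toReal}

/-- Conditional expectation of `X` given an event `A`. -/
noncomputable def condExpEvent {Ω : Type*} [MeasurableSpace Ω] (μ : Measure Ω) (X : Ω → ℝ)
    (A : Set Ω) : ℝ :=
  (∫ ω in A, X ω ∂μ) / (μ A).toReal

/-- with a jointly mixable pair `(F_i, F_j)` of joint center `c`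
(`F_i⁻¹(U) + F_j⁻¹(1-U) = c` a.s.) and the remaining risks comonotonic in `U`,
`S = c + ∑_{k ≠ i,j} F_k⁻¹(U)` a.s., a nondecreasing function of `U`; hence `X_j` and `S`
are antimonotonic and `E[X_j | S > VaR_p(S)] = LES_{1-p}(X_j)` provided the CDF of `X_j`
is continuous and `P(S > VaR_p(S)) = 1 - p`. -/
theorem jointly_mixable_pair_mes_eq_les {Ω : Type*} [MeasurableSpace Ω] (μ : Measure Ω)
    [IsProbabilityMeasure μ] (U : Ω → ℝ) (hU : Measurable U)
    (hUnif : ∀ t ∈ Set.Icc (0 : ℝ) 1, (μ {ω | U ω ≤ t}).toReal = t)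
    (d : ℕ) (Finv : Fin d → ℝ → ℝ) (hmono : ∀ k, Monotone (Finv k))
    (i j : Fin d) (hij : i ≠ j) (c : ℝ)
    (X : Fin d → Ω → ℝ)
    (hXj : ∀ ω, X j ω = Finv j (1 - U ω))
    (hXi : ∀ ω, X i ω = Finv i (U ω))
    (hXk : ∀ k : Fin d, k ≠ i → k ≠ j → ∀ ω, X k ω = Finv k (U ω))
    (hmix : ∀ᵐ ω ∂μ, Finv i (U ω) + Finv j (1 - U ω) = c)
    (S : Ω → ℝ) (hS : ∀ ω, S ω = ∑ k, X k ω)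
    (p : ℝ) (hp : p ∈ Set.Ioo (0 : ℝ) 1)
    (hcont : Continuous fun t : ℝ => (μ {ω | X j ω ≤ t}).toReal)
    (htail : (μ {ω | S ω > VaR μ S p}).toReal = 1 - p) :
    (∀ᵐ ω ∂μ, S ω = c + ∑ k ∈ Finset.univ \ {i, j}, Finv k (U ω)) ∧
    condExpEvent μ (X j) {ω | S ω > VaR μ S p}
      = condExpEvent μ (X j) {ω | X j ω ≤ VaR μ (X j) (1 - p)} := by
  obtain ⟨hp0, hp1⟩ := hp
  have hfin : ∀ s : Set Ω, μ s ≠ ⊤ := fun s => (measure_lt_top μ s).ne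
  have hmeasU : ∀ t : ℝ, MeasurableSet {ω | U ω ≤ t} := fun t => hU measurableSet_Iic
  -- μ {U ≤ 0} = 0, μ {U ≤ 1} = 1
  have hU0 : μ {ω | U ω ≤ (0:ℝ)} = 0 := by
    have h := hUnif 0 ⟨le_refl 0, zero_le_one⟩
    rcases (ENNReal.toReal_eq_zero_iff _).mp h with h' | h'
    · exact h'
    · exact absurd h' (hfin _)
  have hU1 : μ {ω | U ω ≤ (1:ℝ)} = 1 := by
    have h := hUnif 1 ⟨zero_le_one, le_refl 1⟩
    have h' : μ {ω | U ω ≤ (1:ℝ)} = ENNReal.ofReal ((μ {ω | U ω ≤ (1:ℝ)}).toReal) :=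
      (ENNReal.ofReal_toReal (hfin _)).symm
    rw [h', h]; simp
  -- the CDF of U is the clamp function
  have hcF : ∀ t : ℝ, (μ {ω | U ω ≤ t}).toReal = max 0 (min 1 t) := by
    intro t
    rcases lt_or_ge t 0 with h | h
    · have h0 : μ {ω | U ω ≤ t} = 0 :=
        measure_mono_null (fun ω hω => le_trans hω h.le) hU0
      rw [h0, min_eq_right (by linarith : t ≤ 1), max_eq_left h.le]; simp
    · rcases le_or_gt t 1 with h1 | h1
      · rw [hUnif t ⟨h, h1⟩, min_eq_right h1, max_eq_right h]
      · have hle : μ {ω | U ω ≤ (1:ℝ)} ≤ μ {ω | U ω ≤ t} :=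
          measure_mono (fun ω hω => le_trans hω h1.le)
        have h1' : μ {ω | U ω ≤ t} = 1 :=
          le_antisymm prob_le_one (hU1 ▸ hle)
        rw [h1', min_eq_left h1.le, max_eq_right zero_le_one]; simp
  -- no atoms for U
  have hpoint : ∀ a : ℝ, μ {ω | U ω = a} = 0 := by
    intro a
    have key : ∀ ε : ℝ, 0 < ε → (μ {ω | U ω = a}).toReal ≤ ε := by
      intro ε hε
      have hsub2 : {ω | U ω ≤ a - ε} ⊆ {ω | U ω ≤ a} := fun ω h => le_trans h (sub_le_self a hε.le)
      have hsub : {ω | U ω = a} ⊆ {ω | U ω ≤ a} \ {ω | U ω ≤ a - ε} := by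
        intro ω h
        refine ⟨le_of_eq h, fun hmem => ?_⟩
        simp only [Set.mem_setOf_eq] at h hmem
        linarith
      have hdiff : μ ({ω | U ω ≤ a} \ {ω | U ω ≤ a - ε})
          = μ {ω | U ω ≤ a} - μ {ω | U ω ≤ a - ε} :=
        measure_diff hsub2 (hmeasU _).nullMeasurableSet (hfin _)
      calc (μ {ω | U ω = a}).toReal
          ≤ (μ ({ω | U ω ≤ a} \ {ω | U ω ≤ a - ε})).toReal :=
            ENNReal.toReal_mono (hfin _) (measure_mono hsub)
        _ = (μ {ω | U ω ≤ a}).toReal - (μ {ω | U ω ≤ a - ε}).toReal := by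
            rw [hdiff, ENNReal.toReal_sub_of_le (measure_mono hsub2) (hfin _)]
        _ ≤ ε := by
            rw [hcF, hcF]
            simp only [max_def, min_def]
            split_ifs <;> linarith
    have h0 : (μ {ω | U ω = a}).toReal ≤ 0 := by
      refine le_of_forall_pos_le_add ?_
      intro ε hε
      simpa using key ε hε
    have h0' : (μ {ω | U ω = a}).toReal = 0 := le_antisymm h0 ENNReal.toReal_nonneg
    rcases (ENNReal.toReal_eq_zero_iff _).mp h0' with h' | h'
    · exact h'
    · exact absurd h' (hfin _)
  -- measure of upper tails of U
  have hIoi : ∀ t : ℝ, (μ {ω | t < U ω}).toReal = 1 - max 0 (min 1 t) := by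
    intro t
    have hc : {ω | U ω ≤ t}ᶜ = {ω | t < U ω} := by ext ω; simp [not_le]
    have h := measure_compl (hmeasU t) (hfin _)
    rw [hc, measure_univ] at h
    rw [h, ENNReal.toReal_sub_of_le prob_le_one (by simp), ENNReal.toReal_one, hcF]
  -- key lemma: an upper set whose preimage has measure 1 - p is squeezed between Ioi p and Ici p
  have hupset : ∀ T : Set ℝ, (∀ u v : ℝ, u ≤ v → u ∈ T → v ∈ T) →
      (μ (U ⁻¹' T)).toReal = 1 - p → Set.Ioi p ⊆ T ∧ T ⊆ Set.Ici p := by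
    intro T hT hμT
    have hTne : T.Nonempty := by
      by_contra h
      rw [Set.not_nonempty_iff_eq_empty] at h
      rw [h] at hμT
      simp at hμT
      linarith
    have hbdd : BddBelow T := by
      by_contra h
      have hTuniv : T = Set.univ := by
        ext x
        simp only [Set.mem_univ, iff_true]
        obtain ⟨y, hy, hyx⟩ := not_bddBelow_iff.mp h x
        exact hT y x hyx.le hy
      rw [hTuniv] at hμT
      simp at hμT
      linarith
    set a := sInf T with ha_def
    have hIoiT : Set.Ioi a ⊆ T := by
      intro x hx
      obtain ⟨y, hyT, hyx⟩ := exists_lt_of_csInf_lt hTne hx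
      exact hT y x hyx.le hyT
    have hIciT : T ⊆ Set.Ici a := fun x hx => csInf_le hbdd hx
    -- compute the measure of the preimage
    have hIoiPre : (μ (U ⁻¹' Set.Ioi a)).toReal = 1 - max 0 (min 1 a) := hIoi a
    have hlo : (μ (U ⁻¹' Set.Ioi a)).toReal ≤ (μ (U ⁻¹' T)).toReal :=
      ENNReal.toReal_mono (hfin _) (measure_mono (Set.preimage_mono hIoiT))
    have hhi : (μ (U ⁻¹' T)).toReal ≤ 1 - max 0 (min 1 a) := by
      have hsub : U ⁻¹' T ⊆ (U ⁻¹' Set.Ioi a) ∪ {ω | U ω = a} := by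
        intro ω hω
        rcases lt_or_eq_of_le (show a ≤ U ω from hIciT hω) with h' | h'
        · exact Or.inl h'
        · exact Or.inr h'.symm
      calc (μ (U ⁻¹' T)).toReal
          ≤ (μ ((U ⁻¹' Set.Ioi a) ∪ {ω | U ω = a})).toReal :=
            ENNReal.toReal_mono (hfin _) (measure_mono hsub)
        _ ≤ ((μ (U ⁻¹' Set.Ioi a)) + μ {ω | U ω = a}).toReal :=
            ENNReal.toReal_mono (by simp [hfin]) (measure_union_le _ _)
        _ = 1 - max 0 (min 1 a) := by rw [hpoint a, add_zero, hIoiPre]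
    have hmeq : max 0 (min 1 a) = p := by
      have : (μ (U ⁻¹' T)).toReal = 1 - max 0 (min 1 a) := le_antisymm hhi (hIoiPre ▸ hlo)
      rw [hμT] at this
      linarith
    have ha : a = p := by
      rcases le_total 1 a with h | h
      · rw [min_eq_left h, max_eq_right zero_le_one] at hmeq
        linarith
      · rw [min_eq_right h] at hmeq
        rcases le_total a 0 with h2 | h2
        · rw [max_eq_left h2] at hmeq
          linarith
        · rw [max_eq_right h2] at hmeq
          exact hmeq
    exact ⟨ha ▸ hIoiT, ha ▸ hIciT⟩
  -- Part 1 : S = c + sum of the remaining quantiles, a.e.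
  have part1 : ∀ᵐ ω ∂μ, S ω = c + ∑ k ∈ Finset.univ \ {i, j}, Finv k (U ω) := by
    filter_upwards [hmix] with ω hω
    have hsplit : ∑ k, X k ω
        = (∑ k ∈ Finset.univ \ ({i, j} : Finset (Fin d)), X k ω)
          + ∑ k ∈ ({i, j} : Finset (Fin d)), X k ω :=
      (Finset.sum_sdiff (Finset.subset_univ _)).symm
    have hpair : ∑ k ∈ ({i, j} : Finset (Fin d)), X k ω = X i ω + X j ω :=
      Finset.sum_pair hij
    have hrest : ∑ k ∈ Finset.univ \ ({i, j} : Finset (Fin d)), X k ω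
        = ∑ k ∈ Finset.univ \ ({i, j} : Finset (Fin d)), Finv k (U ω) := by
      refine Finset.sum_congr rfl ?_
      intro k hk
      simp only [Finset.mem_sdiff, Finset.mem_insert, Finset.mem_singleton] at hk
      exact hXk k (fun h => hk.2 (Or.inl h)) (fun h => hk.2 (Or.inr h)) ω
    rw [hS, hsplit, hpair, hrest, hXi ω, hXj ω]
    linarith
  -- the nondecreasing function of U
  set G : ℝ → ℝ := fun u => ∑ k ∈ Finset.univ \ ({i, j} : Finset (Fin d)), Finv k u with hG_def
  have hGmono : Monotone G := fun u v huv => Finset.sum_le_sum (fun k _ => hmono k huv)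
  set A' : Set ℝ := {u | VaR μ S p < c + G u} with hA'_def
  set B' : Set ℝ := {u | Finv j (1 - u) ≤ VaR μ (X j) (1 - p)} with hB'_def
  have hA'up : ∀ u v : ℝ, u ≤ v → u ∈ A' → v ∈ A' := by
    intro u v huv hu
    have := hGmono huv
    simp only [hA'_def, Set.mem_setOf_eq] at hu ⊢
    linarith
  have hB'up : ∀ u v : ℝ, u ≤ v → u ∈ B' → v ∈ B' := by
    intro u v huv hu
    simp only [hB'_def, Set.mem_setOf_eq] at hu ⊢
    exact le_trans (hmono j (by linarith)) hu
  -- the tail event equals the preimage of A', a.e.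
  have hAeq : {ω | S ω > VaR μ S p} =ᵐ[μ] (U ⁻¹' A') := by
    rw [Filter.eventuallyEq_set]
    filter_upwards [part1] with ω h
    simp only [Set.mem_setOf_eq, Set.mem_preimage, hA'_def, gt_iff_lt]
    rw [h]
  have hA'μ : (μ (U ⁻¹' A')).toReal = 1 - p := by
    rw [← measure_congr hAeq]
    exact htail
  -- the CDF of X j attains the value 1 - p at its VaR
  have hXjmeas : Measurable (X j) := by
    have : X j = fun ω => Finv j (1 - U ω) := funext hXj
    rw [this]
    exact ((hmono j).measurable).comp (measurable_const.sub hU)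
  have hF1 : μ {ω | X j ω ≤ Finv j 1} = 1 := by
    have hsub : {ω | U ω < 0}ᶜ ⊆ {ω | X j ω ≤ Finv j 1} := by
      intro ω h
      simp only [Set.mem_compl_iff, Set.mem_setOf_eq, not_lt] at h
      rw [Set.mem_setOf_eq, hXj ω]
      exact hmono j (by linarith)
    have h0 : μ {ω | U ω < 0} = 0 := by
      apply measure_mono_null _ hU0
      intro ω h
      simp only [Set.mem_setOf_eq] at h ⊢
      exact h.le
    have hcompl : μ ({ω | U ω < 0}ᶜ) = 1 := by
      have hmlt : MeasurableSet {ω | U ω < 0} := hU measurableSet_Iio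
      rw [measure_compl hmlt (hfin _), h0, measure_univ, tsub_zero]
    exact le_antisymm prob_le_one (hcompl ▸ measure_mono hsub)
  have hSetne : ((Finv j 1) ∈ {x : ℝ | 1 - p ≤ (μ {ω | X j ω ≤ x}).toReal}) := by
    simp only [Set.mem_setOf_eq, hF1, ENNReal.toReal_one]
    linarith
  have hSbdd : BddBelow {x : ℝ | 1 - p ≤ (μ {ω | X j ω ≤ x}).toReal} := by
    refine ⟨Finv j 0 - 1, fun s hs => ?_⟩
    by_contra hlt
    push_neg at hlt
    have hnull : μ {ω | X j ω ≤ s} = 0 := by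
      refine measure_mono_null (t := {ω | (1:ℝ) < U ω}) ?_ ?_
      · intro ω h
        simp only [Set.mem_setOf_eq] at h ⊢
        by_contra hle
        push_neg at hle
        rw [hXj ω] at h
        have : Finv j 0 ≤ Finv j (1 - U ω) := hmono j (by linarith)
        linarith
      · have hc : {ω | U ω ≤ (1:ℝ)}ᶜ = {ω | (1:ℝ) < U ω} := by ext ω; simp [not_le]
        rw [← hc, measure_compl (hmeasU 1) (hfin _), hU1, measure_univ, tsub_self]
    rw [Set.mem_setOf_eq, hnull] at hs
    simp at hs
    linarith
  have hclosed : IsClosed {x : ℝ | 1 - p ≤ (μ {ω | X j ω ≤ x}).toReal} :=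
    isClosed_le continuous_const hcont
  have hvj_def : VaR μ (X j) (1 - p) = sInf {x : ℝ | 1 - p ≤ (μ {ω | X j ω ≤ x}).toReal} := rfl
  have hFvj_ge : 1 - p ≤ (μ {ω | X j ω ≤ VaR μ (X j) (1 - p)}).toReal := by
    rw [hvj_def]
    exact hclosed.csInf_mem ⟨_, hSetne⟩ hSbdd
  have hFvj_le : (μ {ω | X j ω ≤ VaR μ (X j) (1 - p)}).toReal ≤ 1 - p := by
    by_contra h
    push_neg at h
    have hev : ∀ᶠ x in nhdsWithin (VaR μ (X j) (1 - p)) (Set.Iio (VaR μ (X j) (1 - p))),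
        1 - p < (μ {ω | X j ω ≤ x}).toReal :=
      ((hcont.tendsto _).eventually (eventually_gt_nhds h)).filter_mono nhdsWithin_le_nhds
    obtain ⟨x, hx1, hx2⟩ := (hev.and eventually_mem_nhdsWithin).exists
    have : VaR μ (X j) (1 - p) ≤ x := by
      rw [hvj_def]
      exact csInf_le hSbdd (le_of_lt hx1)
    exact absurd hx2 (not_lt.mpr this ∘ id)
  have hFvj : (μ {ω | X j ω ≤ VaR μ (X j) (1 - p)}).toReal = 1 - p :=
    le_antisymm hFvj_le hFvj_ge
  have hBeq : U ⁻¹' B' = {ω | X j ω ≤ VaR μ (X j) (1 - p)} := by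
    ext ω
    simp only [Set.mem_preimage, hB'_def, Set.mem_setOf_eq, hXj ω]
  have hB'μ : (μ (U ⁻¹' B')).toReal = 1 - p := by rw [hBeq]; exact hFvj
  -- both A' and B' are squeezed between Ioi p and Ici p
  obtain ⟨hA1, hA2⟩ := hupset A' hA'up hA'μ
  obtain ⟨hB1, hB2⟩ := hupset B' hB'up hB'μ
  have hsym : ∀ T₁ T₂ : Set ℝ, Set.Ioi p ⊆ T₁ → T₁ ⊆ Set.Ici p →
      Set.Ioi p ⊆ T₂ → T₂ ⊆ Set.Ici p →
      U ⁻¹' T₁ \ U ⁻¹' T₂ ⊆ {ω | U ω = p} := by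
    intro T₁ T₂ h1 h2 h3 h4 ω hω
    obtain ⟨hin, hout⟩ := hω
    have hge : p ≤ U ω := h2 hin
    have hle : ¬ p < U ω := fun hlt => hout (h3 hlt)
    exact le_antisymm (not_lt.mp hle) hge
  have hAB : (U ⁻¹' A') =ᵐ[μ] (U ⁻¹' B') := by
    rw [MeasureTheory.ae_eq_set]
    exact ⟨measure_mono_null (hsym A' B' hA1 hA2 hB1 hB2) (hpoint p),
      measure_mono_null (hsym B' A' hB1 hB2 hA1 hA2) (hpoint p)⟩
  have hfinal : {ω | S ω > VaR μ S p} =ᵐ[μ] {ω | X j ω ≤ VaR μ (X j) (1 - p)} :=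
    hAeq.trans (hBeq ▸ hAB)
  refine ⟨part1, ?_⟩
  unfold condExpEvent
  rw [setIntegral_congr_set hfinal, measure_congr hfinal]
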